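/- arXiv:2007.01841 — 2 statements merged into one kernel-verified Lean document; each statement's English description precedes it below -/
import Mathlib

section
/- Let L be a finite-dimensional Lie algebra over a field K of characteristic zero, and let e, h ∈ L. If f, f' ∈ L are both such that (e, h, f) and (e, h, f') are sl₂-triples (i.e. [h,e] = 2e, [h,f] = −2f, [e,f] = h, and likewise for f'), then f = f'. (In other words, the third element of an sl₂-triple is uniquely determined by the other two.) -/
/-- `(e, h, f)` is an `sl₂`-triple in a Lie algebra: `[h,e] = 2e`, `[h,f] = -2f`, `[e,f] = h`. -/
def IsSl2TripleOf {L : Type*} [LieRing L] (e h f : L) : Prop :=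
  ⁅h, e⁆ = 2 • e ∧ ⁅h, f⁆ = -(2 • f) ∧ ⁅e, f⁆ = h

/-- In a finite-dimensional Lie algebra over a field of characteristic zero, the third
element of an `sl₂`-triple is uniquely determined by the other two. -/
theorem sl2Triple_third_unique {K L : Type*} [Field K] [CharZero K]
    [LieRing L] [LieAlgebra K L] [FiniteDimensional K L]
    (e h f f' : L) (hf : IsSl2TripleOf e h f) (hf' : IsSl2TripleOf e h f') :
    f = f' := by
  obtain ⟨he1, hf1, hef1⟩ := hf
  obtain ⟨_, hf2, hef2⟩ := hf'
  have key : ∀ x : L, (2:ℕ) • x = 0 → x = 0 := by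
    intro x hx
    have : (2 : K) • x = 0 := by rwa [← Nat.cast_ofNat, Nat.cast_smul_eq_nsmul]
    simpa using (smul_eq_zero.mp this).resolve_left (by norm_num)
  by_cases hh : h = 0
  · subst hh
    have hfz : f = 0 := key f (by rw [zero_lie] at hf1; rw [← neg_eq_zero, ← hf1])
    have hfz' : f' = 0 := key f' (by rw [zero_lie] at hf2; rw [← neg_eq_zero, ← hf2])
    rw [hfz, hfz']
  · have t : IsSl2Triple h e f := ⟨hh, hef1, he1, hf1⟩
    by_contra hne
    have hd : f - f' ≠ 0 := sub_ne_zero.mpr hne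
    have P : t.HasPrimitiveVectorWith (f - f') (-2 : K) := by
      refine ⟨hd, ?_, ?_⟩
      · rw [lie_sub, hf1, hf2]
        simp only [neg_smul, two_smul, smul_sub]
      · rw [lie_sub, hef1, hef2, sub_self]
    obtain ⟨n, hn⟩ := P.exists_nat
    have : ((-2 : ℤ) : K) = ((n : ℤ) : K) := by push_cast; exact hn
    have h2 : (-2 : ℤ) = (n : ℤ) := Int.cast_injective this
    omega
end

section
/- Let K be a field of characteristic zero, V a finite-dimensional K-vector space, and Q a quadratic form on V whose polar bilinear form is nondegenerate. Let f : V → V be a linear isomorphism with Q(f(v)) = Q(v) for all v ∈ V and det(f) = 1. Then there exists a unit g of the Clifford algebra Cl(Q), lying in the even subalgebra Cl⁺(Q), such that ι(f(v)) = g · ι(v) · g⁻¹ for all v ∈ V. (This expresses the surjectivity of the map CSpin(Q)(K) → SO(Q)(K), used in the paper via Hilbert's Theorem 90 for K = ℚ and K = ℚ_ℓ.) -/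
open QuadraticMap Module

namespace CSpinAux

variable {K V : Type*} [Field K] [CharZero K] [AddCommGroup V] [Module K V]
set_option linter.unusedSectionVars false

variable (Q : QuadraticForm K V)

/-- Reflection in an anisotropic vector `u`. -/
noncomputable def qrefl (u : V) (hu : Q u ≠ 0) : V ≃ₗ[K] V :=
  Module.reflection (f := (Q u)⁻¹ • (QuadraticMap.polarBilin Q u)) (x := u)
    (by simp [QuadraticMap.polar_self]; field_simp)

theorem qrefl_apply (u : V) (hu : Q u ≠ 0) (v : V) :
    qrefl Q u hu v = v - ((Q u)⁻¹ * polar Q u v) • u := by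
  simp [qrefl, Module.reflection_apply, smul_smul]

theorem qrefl_involutive (u : V) (hu : Q u ≠ 0) :
    Function.Involutive (qrefl Q u hu) :=
  Module.involutive_reflection _

theorem map_add_smul (u v : V) (a : K) :
    Q (v + a • u) = Q v + a * a * Q u + a * polar Q v u := by
  have e1 : polar Q v (a • u) = a * polar Q v u := by
    rw [polar_smul_right]; simp
  have h2 : Q (a • u) = a * a * Q u := QuadraticMap.map_smul Q a u
  simp only [QuadraticMap.polar] at e1 ⊢
  linear_combination e1 + h2

theorem qrefl_isometry (u : V) (hu : Q u ≠ 0) (v : V) : Q (qrefl Q u hu v) = Q v := by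
  rw [qrefl_apply, sub_eq_add_neg, ← neg_smul, map_add_smul]
  rw [show polar Q v u = polar Q u v from polar_comm _ _ _]
  field_simp
  ring

theorem qrefl_apply_self (u : V) (hu : Q u ≠ 0) : qrefl Q u hu u = -u := by
  rw [qrefl_apply]
  rw [show polar Q u u = 2 * Q u by rw [polar_self, two_smul, two_mul]]
  rw [show (Q u)⁻¹ * (2 * Q u) = 2 by field_simp]
  module

theorem qrefl_apply_of_polar_eq_zero (u : V) (hu : Q u ≠ 0) (v : V)
    (h : polar Q u v = 0) : qrefl Q u hu v = v := by
  rw [qrefl_apply, h]; simp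

end CSpinAux

namespace CSpinAux

variable {K V : Type*} [Field K] [CharZero K] [AddCommGroup V] [Module K V]
variable (Q : QuadraticForm K V)

set_option linter.unusedSectionVars false

theorem qrefl_det [FiniteDimensional K V] (u : V) (hu : Q u ≠ 0) :
    LinearMap.det (qrefl Q u hu : V →ₗ[K] V) = -1 := by
  classical
  have hu0 : u ≠ 0 := fun h => hu (by simp [h])
  set B : LinearMap.BilinForm K V := QuadraticMap.polarBilin Q with hB
  have hBuu : ¬B.IsOrtho u u := by
    simp only [LinearMap.BilinForm.IsOrtho, hB, QuadraticMap.polarBilin_apply_apply]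
    rw [show polar Q u u = 2 * Q u by rw [polar_self, two_smul, two_mul]]
    simp [hu]
  have hc := LinearMap.BilinForm.isCompl_span_singleton_orthogonal (B := B) hBuu
  set W := B.orthogonal (K ∙ u) with hW
  set r := qrefl Q u hu with hr
  have hr1 : ∀ x : (K ∙ u), r ↑x = -(x : V) := by
    rintro ⟨x, hx⟩
    obtain ⟨c, rfl⟩ := Submodule.mem_span_singleton.mp hx
    rw [hr, LinearEquiv.map_smul, qrefl_apply_self, smul_neg]
  have hr2 : ∀ y : W, r ↑y = (y : V) := by
    rintro ⟨y, hy⟩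
    exact qrefl_apply_of_polar_eq_zero Q u hu y (hy u (Submodule.mem_span_singleton_self u))
  let e := Submodule.prodEquivOfIsCompl _ _ hc
  let b := (finBasis K (K ∙ u)).prod (finBasis K W)
  have hM : LinearMap.toMatrix b b (e.symm ∘ₗ (r : V →ₗ[K] V) ∘ₗ e.symm.symm) =
      Matrix.fromBlocks (-1) 0 0 1 := by
    ext (i | i) (j | j) <;>
      simp [LinearMap.toMatrix_apply, b, e, hr1, hr2, Matrix.one_apply, Finsupp.single_apply,
        eq_comm]
  rw [← LinearMap.det_conj (r : V →ₗ[K] V) e.symm, ← LinearMap.det_toMatrix b, hM,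
    Matrix.det_fromBlocks_zero₂₁, Matrix.det_one, mul_one, Matrix.det_neg,
    Matrix.det_one, mul_one, Fintype.card_fin, finrank_span_singleton hu0, pow_one]

end CSpinAux

namespace CSpinAux

variable {K V : Type*} [Field K] [CharZero K] [AddCommGroup V] [Module K V]
variable (Q : QuadraticForm K V)

set_option linter.unusedSectionVars false

/-- Product of the reflections attached to a list of anisotropic vectors. -/
noncomputable def qreflProd (l : List {u : V // Q u ≠ 0}) : V ≃ₗ[K] V :=
  (l.map fun u => qrefl Q u.1 u.2).prod

@[simp] theorem qreflProd_nil : qreflProd Q ([] : List {u : V // Q u ≠ 0}) = 1 := rfl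

theorem qreflProd_cons (u : {u : V // Q u ≠ 0}) (t : List {u : V // Q u ≠ 0}) :
    qreflProd Q (u :: t) = qrefl Q u.1 u.2 * qreflProd Q t := by
  simp [qreflProd]

theorem mul_apply (f g : V ≃ₗ[K] V) (v : V) : (f * g) v = f (g v) := rfl

theorem qreflProd_isometry (l : List {u : V // Q u ≠ 0}) (v : V) :
    Q (qreflProd Q l v) = Q v := by
  induction l generalizing v with
  | nil => simp
  | cons u t ih => rw [qreflProd_cons, mul_apply, qrefl_isometry, ih]

theorem coe_mul (f g : V ≃ₗ[K] V) :
    ((f * g : V ≃ₗ[K] V) : V →ₗ[K] V) = (f : V →ₗ[K] V) ∘ₗ (g : V →ₗ[K] V) :=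
  LinearMap.ext fun _ => rfl

theorem qreflProd_det [FiniteDimensional K V] (l : List {u : V // Q u ≠ 0}) :
    LinearMap.det (qreflProd Q l : V →ₗ[K] V) = (-1 : K) ^ l.length := by
  induction l with
  | nil => simp [qreflProd]
  | cons u t ih =>
    rw [qreflProd_cons, coe_mul, LinearMap.det_comp, qrefl_det, ih, List.length_cons, pow_succ]
    ring

theorem polar_sub_left' (x y z : V) : polar Q (x - y) z = polar Q x z - polar Q y z :=
  polar_sub_left Q x y z

theorem exists_qreflProd_map_eq (x y : V) (hx : Q x ≠ 0) (hxy : Q x = Q y) :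
    ∃ l : List {u : V // Q u ≠ 0}, qreflProd Q l x = y := by
  have hxx : polar Q x x = 2 * Q x := by rw [polar_self, two_smul, two_mul]
  have hsub : Q (x - y) = 2 * Q x - polar Q x y := by
    have := map_add_smul Q y x (-1)
    rw [show x + (-1 : K) • y = x - y by module] at this
    rw [this, ← hxy, show polar Q x y = polar Q y x from polar_comm _ _ _]
    ring
  have hadd : Q (x + y) = 2 * Q x + polar Q x y := by
    have := map_add_smul Q y x 1
    rw [show x + (1 : K) • y = x + y by module] at this
    rw [this, ← hxy, show polar Q x y = polar Q y x from polar_comm _ _ _]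
    ring
  by_cases h1 : Q (x - y) ≠ 0
  · refine ⟨[⟨x - y, h1⟩], ?_⟩
    rw [qreflProd_cons, qreflProd_nil, mul_one, qrefl_apply]
    have hp : polar Q (x - y) x = Q (x - y) := by
      rw [polar_sub_left, hsub, hxx, show polar Q y x = polar Q x y from polar_comm _ _ _]
    rw [hp, mul_comm, mul_inv_cancel₀ h1, one_smul]
    show x - (x - y) = y
    abel
  · push_neg at h1
    have h2 : Q (x + y) ≠ 0 := by
      intro h2
      apply hx
      have h4 : (4 : K) * Q x = 0 := by linear_combination h1 + h2 - hsub - hadd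
      exact (mul_eq_zero.mp h4).resolve_left (by norm_num)
    have hy : Q y ≠ 0 := hxy ▸ hx
    have hp : polar Q (x + y) x = Q (x + y) := by
      rw [polar_add_left, hadd, hxx, show polar Q y x = polar Q x y from polar_comm _ _ _]
    have step1 : qrefl Q (x + y) h2 x = -y := by
      rw [qrefl_apply, hp, mul_comm, mul_inv_cancel₀ h2, one_smul]
      abel
    refine ⟨[⟨y, hy⟩, ⟨x + y, h2⟩], ?_⟩
    rw [qreflProd_cons, qreflProd_cons, qreflProd_nil, mul_one, mul_apply]
    show qrefl Q y hy (qrefl Q (x + y) h2 x) = y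
    rw [step1, show (qrefl Q y hy) (-y) = -(qrefl Q y hy y) from map_neg _ _, qrefl_apply_self, neg_neg]

end CSpinAux

namespace CSpinAux

variable {K : Type*} [Field K] [CharZero K]

set_option linter.unusedSectionVars false
set_option maxHeartbeats 1000000

section helpers

variable {V : Type*} [AddCommGroup V] [Module K V] (Q : QuadraticForm K V)

theorem qrefl_mul_self (u : V) (hu : Q u ≠ 0) :
    qrefl Q u hu * qrefl Q u hu = 1 :=
  LinearEquiv.ext fun v => qrefl_involutive Q u hu v

theorem qreflProd_append (l₁ l₂ : List {u : V // Q u ≠ 0}) :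
    qreflProd Q (l₁ ++ l₂) = qreflProd Q l₁ * qreflProd Q l₂ := by
  simp [qreflProd]

theorem qreflProd_reverse_mul (l : List {u : V // Q u ≠ 0}) :
    qreflProd Q l.reverse * qreflProd Q l = 1 := by
  induction l with
  | nil => simp
  | cons u t ih =>
    rw [List.reverse_cons, qreflProd_append, qreflProd_cons, qreflProd_cons, qreflProd_nil,
      mul_one, mul_assoc, ← mul_assoc (qrefl Q u.1 u.2), qrefl_mul_self, one_mul, ih]

theorem qreflProd_inv (l : List {u : V // Q u ≠ 0}) :
    (qreflProd Q l)⁻¹ = qreflProd Q l.reverse :=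
  inv_eq_of_mul_eq_one_left (qreflProd_reverse_mul Q l)

theorem isometry_polar {f : V ≃ₗ[K] V} (hf : ∀ v, Q (f v) = Q v) (x y : V) :
    polar Q (f x) (f y) = polar Q x y := by
  simp only [QuadraticMap.polar, ← map_add, hf]

end helpers

theorem cartan_dieudonne : ∀ (n : ℕ) (V : Type u_v) [AddCommGroup V] [Module K V]
    [FiniteDimensional K V] (Q : QuadraticForm K V),
    LinearMap.BilinForm.Nondegenerate (QuadraticMap.polarBilin Q) →
    ∀ (f : V ≃ₗ[K] V), (∀ v, Q (f v) = Q v) →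
    Module.finrank K V = n → ∃ l : List {u : V // Q u ≠ 0}, f = qreflProd Q l := by
  intro n
  induction n using Nat.strong_induction_on with
  | _ n ih =>
  intro V iAG iM iFD Q hQ f hf hn
  rcases Nat.eq_zero_or_pos n with h0 | hpos
  · subst h0
    have hV : Subsingleton V := by
      rw [← Module.finrank_zero_iff (R := K)]; exact hn
    exact ⟨[], LinearEquiv.ext fun v => Subsingleton.elim _ _⟩
  -- find an anisotropic vector
  have hexists : ∃ v₀ : V, Q v₀ ≠ 0 := by
    by_contra h
    push_neg at h
    have hz : ∀ v : V, v = 0 := fun v => hQ.1 v (fun w => by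
      simp [QuadraticMap.polarBilin_apply_apply, QuadraticMap.polar, h])
    have : Subsingleton V := ⟨fun a b => by rw [hz a, hz b]⟩
    rw [Module.finrank_zero_iff.mpr this] at hn
    omega
  obtain ⟨v₀, hv₀⟩ := hexists
  have hv₀0 : v₀ ≠ 0 := fun h => hv₀ (by simp [h])
  obtain ⟨l₀, hl₀⟩ := exists_qreflProd_map_eq Q (f v₀) v₀ (by rw [hf]; exact hv₀) (by rw [hf])
  set g : V ≃ₗ[K] V := qreflProd Q l₀ * f with hg
  have hgiso : ∀ v, Q (g v) = Q v := fun v => by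
    rw [hg, mul_apply, qreflProd_isometry, hf]
  have hgv₀ : g v₀ = v₀ := hl₀
  have hgpolar : ∀ x y, polar Q (g x) (g y) = polar Q x y := isometry_polar Q hgiso
  set B : LinearMap.BilinForm K V := QuadraticMap.polarBilin Q with hB
  have hBuu : ¬B.IsOrtho v₀ v₀ := by
    simp only [LinearMap.BilinForm.IsOrtho, hB, QuadraticMap.polarBilin_apply_apply]
    rw [show polar Q v₀ v₀ = 2 * Q v₀ by rw [polar_self, two_smul, two_mul]]
    simp [hv₀]
  have hc := LinearMap.BilinForm.isCompl_span_singleton_orthogonal (B := B) hBuu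
  set W : Submodule K V := B.orthogonal (K ∙ v₀) with hW
  have hWmem : ∀ w : V, w ∈ W ↔ polar Q v₀ w = 0 := by
    intro w
    constructor
    · intro hw
      exact hw v₀ (Submodule.mem_span_singleton_self v₀)
    · intro hp z hz
      obtain ⟨c, rfl⟩ := Submodule.mem_span_singleton.mp hz
      show B (c • v₀) w = 0
      rw [LinearMap.map_smul]
      simp only [LinearMap.smul_apply, smul_eq_mul]
      rw [show B v₀ w = polar Q v₀ w from rfl, hp, mul_zero]
  -- g preserves W
  have hmemg : ∀ {h : V ≃ₗ[K] V}, (∀ v, Q (h v) = Q v) → h v₀ = v₀ → ∀ w ∈ W, h w ∈ W := by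
    intro h hiso hfix w hw
    rw [hWmem]
    calc polar Q v₀ (h w) = polar Q (h v₀) (h w) := by rw [hfix]
    _ = polar Q v₀ w := isometry_polar Q hiso v₀ w
    _ = 0 := (hWmem w).mp hw
  have hsymm_iso : ∀ v, Q (g.symm v) = Q v := fun v => by
    conv_rhs => rw [← g.apply_symm_apply v]
    rw [hgiso]
  have hsymm_fix : g.symm v₀ = v₀ := by
    conv_lhs => rw [← hgv₀]
    exact g.symm_apply_apply v₀
  have hWmap : W.map (g : V →ₗ[K] V) = W := by
    apply le_antisymm
    · rintro _ ⟨w, hw, rfl⟩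
      exact hmemg hgiso hgv₀ w hw
    · intro w hw
      exact ⟨g.symm w, hmemg hsymm_iso hsymm_fix w hw, g.apply_symm_apply w⟩
  set g' : W ≃ₗ[K] W := (g.submoduleMap W).trans (LinearEquiv.ofEq _ _ hWmap) with hg'
  have hg'apply : ∀ w : W, (g' w : V) = g (w : V) := fun w => rfl
  set Q' : QuadraticForm K W := Q.comp W.subtype with hQ'def
  have hQ'apply : ∀ w : W, Q' w = Q (w : V) := fun w => rfl
  have hpolar' : ∀ x y : W, polar Q' x y = polar Q (x : V) (y : V) := fun x y => by
    simp [QuadraticMap.polar, hQ'apply]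
  -- nondegeneracy of the restriction
  have hQ'nd : LinearMap.BilinForm.Nondegenerate (QuadraticMap.polarBilin Q') := by
    refine LinearMap.BilinForm.Nondegenerate.ofSeparatingLeft ?_
    rintro ⟨w, hw⟩ hall
    have hwall : ∀ v : V, B w v = 0 := by
      intro v
      obtain ⟨a, b, ha, hb, rfl⟩ := Submodule.codisjoint_iff_exists_add_eq.mp hc.codisjoint v
      rw [LinearMap.map_add]
      obtain ⟨c, rfl⟩ := Submodule.mem_span_singleton.mp ha
      have h1 : B w v₀ = 0 := by
        rw [show B w v₀ = polar Q w v₀ from rfl, polar_comm]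
        exact (hWmem w).mp hw
      have h2 : B w b = 0 := by
        have := hall ⟨b, hb⟩
        rw [QuadraticMap.polarBilin_apply_apply, hpolar'] at this
        exact this
      rw [LinearMap.map_smul, smul_eq_mul, h1, mul_zero, h2, add_zero]
    exact Subtype.ext (hQ.1 w hwall)
  have hfrW : Module.finrank K W = n - 1 := by
    have h1 := Submodule.finrank_add_eq_of_isCompl hc
    rw [finrank_span_singleton hv₀0, hn] at h1
    omega
  have hg'iso : ∀ w : W, Q' (g' w) = Q' w := fun w => by
    rw [hQ'apply, hQ'apply, hg'apply, hgiso]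
  obtain ⟨l', hl'⟩ := ih (n - 1) (by omega) W Q' hQ'nd g' hg'iso hfrW
  -- lift the list from W to V
  have hQ'ne : ∀ u : {u : W // Q' u ≠ 0}, Q ((u.1 : W) : V) ≠ 0 := fun u => by
    rw [← hQ'apply]; exact u.2
  -- lifted reflections agree with reflections downstairs
  have hlift : ∀ (u : {u : W // Q' u ≠ 0}) (w : W),
      qrefl Q ((u.1 : W) : V) (hQ'ne u) (w : V) = ((qrefl Q' u.1 u.2 w : W) : V) := by
    intro u w
    rw [qrefl_apply, qrefl_apply]
    push_cast
    rw [hQ'apply, hpolar']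
  have hliftProd : ∀ (t : List {u : W // Q' u ≠ 0}) (w : W),
      qreflProd Q (t.map (fun u => ⟨((u.1 : W) : V), hQ'ne u⟩)) (w : V)
        = ((qreflProd Q' t w : W) : V) := by
    intro t
    induction t with
    | nil => intro w; simp
    | cons u s ihs =>
      intro w
      rw [List.map_cons, qreflProd_cons, qreflProd_cons, mul_apply, mul_apply, ihs, hlift]
  -- lifted reflections fix v₀
  have hfixgen : ∀ (t : List {u : W // Q' u ≠ 0}),
      qreflProd Q (t.map (fun u => ⟨((u.1 : W) : V), hQ'ne u⟩)) v₀ = v₀ := by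
    intro t
    induction t with
    | nil => simp
    | cons u s ihs =>
      rw [List.map_cons, qreflProd_cons, mul_apply, ihs]
      exact qrefl_apply_of_polar_eq_zero Q _ _ v₀ (by
        rw [polar_comm]
        exact (hWmem _).mp u.1.2)
  set l₁ : List {u : V // Q u ≠ 0} := l'.map (fun u => ⟨((u.1 : W) : V), hQ'ne u⟩) with hl₁
  have hfix₁ : qreflProd Q l₁ v₀ = v₀ := hfixgen l'
  have hkey : g = qreflProd Q l₁ := by
    apply LinearEquiv.ext
    intro v
    obtain ⟨a, b, ha, hb, rfl⟩ := Submodule.codisjoint_iff_exists_add_eq.mp hc.codisjoint v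
    obtain ⟨c, rfl⟩ := Submodule.mem_span_singleton.mp ha
    rw [LinearEquiv.map_add, LinearEquiv.map_add, LinearEquiv.map_smul, LinearEquiv.map_smul,
      hgv₀, hfix₁]
    congr 1
    have h1 : qreflProd Q l₁ b = ((g' ⟨b, hb⟩ : W) : V) := by
      rw [hl₁, hliftProd l' ⟨b, hb⟩, ← hl']
    rw [h1, hg'apply]
  refine ⟨l₀.reverse ++ l₁, ?_⟩
  rw [qreflProd_append, ← qreflProd_inv, ← hkey, hg]
  rw [← mul_assoc, inv_mul_cancel, one_mul]

end CSpinAux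

namespace CSpinAux

open CliffordAlgebra

variable {K V : Type*} [Field K] [CharZero K] [AddCommGroup V] [Module K V]
variable (Q : QuadraticForm K V)

set_option linter.unusedSectionVars false

/-- The unit of the Clifford algebra attached to an anisotropic vector. -/
noncomputable def ιUnit (u : {u : V // Q u ≠ 0}) : (CliffordAlgebra Q)ˣ :=
  (CliffordAlgebra.isUnit_ι_of_isUnit Q (isUnit_iff_ne_zero.mpr u.2)).unit

@[simp] theorem ιUnit_coe (u : {u : V // Q u ≠ 0}) :
    (ιUnit Q u : CliffordAlgebra Q) = ι Q u.1 :=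
  IsUnit.unit_spec _

theorem ιUnit_inv_coe (u : {u : V // Q u ≠ 0}) :
    ((ιUnit Q u)⁻¹ : (CliffordAlgebra Q)ˣ) = (ι Q ((Q u.1)⁻¹ • u.1) : CliffordAlgebra Q) := by
  have h : (ιUnit Q u : CliffordAlgebra Q) * ι Q ((Q u.1)⁻¹ • u.1) = 1 := by
    rw [ιUnit_coe, LinearMap.map_smul, mul_smul_comm, ι_sq_scalar, Algebra.smul_def, ← map_mul,
      inv_mul_cancel₀ u.2, map_one]
  exact Units.inv_eq_of_mul_eq_one_right h ▸ rfl

theorem ιUnit_conj (u : {u : V // Q u ≠ 0}) (w : V) :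
    (ιUnit Q u : CliffordAlgebra Q) * ι Q w * ((ιUnit Q u)⁻¹ : (CliffordAlgebra Q)ˣ) =
      - ι Q (qrefl Q u.1 u.2 w) := by
  rw [ιUnit_coe, ιUnit_inv_coe, LinearMap.map_smul, mul_smul_comm, ι_mul_ι_mul_ι,
    ← LinearMap.map_smul]
  have h : (Q u.1)⁻¹ • (polar Q u.1 w • u.1 - Q u.1 • w)
      = ((Q u.1)⁻¹ * polar Q u.1 w) • u.1 - w := by
    rw [smul_sub, smul_smul, smul_smul, inv_mul_cancel₀ u.2, one_smul]
  rw [h, qrefl_apply, ← LinearMap.map_neg, neg_sub]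

/-- The unit attached to a list of anisotropic vectors. -/
noncomputable def ιUnitProd (l : List {u : V // Q u ≠ 0}) : (CliffordAlgebra Q)ˣ :=
  (l.map (ιUnit Q)).prod

theorem ιUnitProd_conj (l : List {u : V // Q u ≠ 0}) (v : V) :
    (ιUnitProd Q l : CliffordAlgebra Q) * ι Q v * ((ιUnitProd Q l)⁻¹ : (CliffordAlgebra Q)ˣ) =
      ((-1 : K) ^ l.length) • ι Q (qreflProd Q l v) := by
  induction l generalizing v with
  | nil => simp [ιUnitProd]
  | cons u t ih =>
    have hcons : ιUnitProd Q (u :: t) = ιUnit Q u * ιUnitProd Q t := by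
      simp [ιUnitProd]
    rw [hcons, mul_inv_rev, Units.val_mul, Units.val_mul]
    have : (ιUnit Q u : CliffordAlgebra Q) * (ιUnitProd Q t : CliffordAlgebra Q) * ι Q v *
          (((ιUnitProd Q t)⁻¹ : (CliffordAlgebra Q)ˣ) * ((ιUnit Q u)⁻¹ : (CliffordAlgebra Q)ˣ)) =
        (ιUnit Q u : CliffordAlgebra Q) *
          ((ιUnitProd Q t : CliffordAlgebra Q) * ι Q v *
            ((ιUnitProd Q t)⁻¹ : (CliffordAlgebra Q)ˣ)) *
          ((ιUnit Q u)⁻¹ : (CliffordAlgebra Q)ˣ) := by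
      simp only [mul_assoc]
    rw [this, ih, mul_smul_comm, smul_mul_assoc, ιUnit_conj, qreflProd_cons, mul_apply,
      List.length_cons, pow_succ, smul_neg, ← neg_smul]
    congr 1
    ring

theorem ιUnitProd_mem_evenOdd (l : List {u : V // Q u ≠ 0}) :
    (ιUnitProd Q l : CliffordAlgebra Q) ∈ CliffordAlgebra.evenOdd Q (l.length : ZMod 2) := by
  induction l with
  | nil =>
    simp only [List.length_nil, Nat.cast_zero]
    have h1 : (ιUnitProd Q ([] : List {u : V // Q u ≠ 0}) : CliffordAlgebra Q) = 1 := rfl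
    rw [h1]
    exact Submodule.one_le.mp (CliffordAlgebra.one_le_evenOdd_zero Q)
  | cons u t ih =>
    have hcons : (ιUnitProd Q (u :: t) : CliffordAlgebra Q) =
        ι Q u.1 * (ιUnitProd Q t : CliffordAlgebra Q) := by
      simp [ιUnitProd, Units.val_mul]
    rw [hcons, List.length_cons]
    have : ((t.length + 1 : ℕ) : ZMod 2) = 1 + (t.length : ZMod 2) := by push_cast; ring
    rw [this]
    exact SetLike.mul_mem_graded (CliffordAlgebra.ι_mem_evenOdd_one Q u.1) ih

theorem ιUnitProd_mem_even (l : List {u : V // Q u ≠ 0}) (hl : Even l.length) :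
    (ιUnitProd Q l : CliffordAlgebra Q) ∈ CliffordAlgebra.even Q := by
  have h0 : ((l.length : ℕ) : ZMod 2) = 0 := by
    rw [ZMod.natCast_eq_zero_iff]
    exact hl.two_dvd
  have := ιUnitProd_mem_evenOdd Q l
  rw [h0] at this
  rw [← Subalgebra.mem_toSubmodule, CliffordAlgebra.even_toSubmodule]
  exact this

end CSpinAux


/-- Surjectivity of `CSpin(Q)(K) → SO(Q)(K)`: over a field `K` of characteristic zero, any
linear automorphism `f` of a finite-dimensional quadratic space `(V, Q)` with nondegenerate
polar form that preserves `Q` and has determinant `1` is induced by conjugation by an even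
unit `g` of the Clifford algebra: `ι(f v) = g ⬝ ι(v) ⬝ g⁻¹` for all `v`. -/
theorem exists_even_unit_conj_of_isometry_det_one
    {K V : Type*} [Field K] [CharZero K] [AddCommGroup V] [Module K V]
    [FiniteDimensional K V] (Q : QuadraticForm K V)
    (hQ : LinearMap.BilinForm.Nondegenerate (QuadraticMap.polarBilin Q))
    (f : V ≃ₗ[K] V) (hf : ∀ v : V, Q (f v) = Q v)
    (hdet : LinearMap.det (f : V →ₗ[K] V) = 1) :
    ∃ g : (CliffordAlgebra Q)ˣ, (g : CliffordAlgebra Q) ∈ CliffordAlgebra.even Q ∧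
      ∀ v : V, CliffordAlgebra.ι Q (f v) =
        (g : CliffordAlgebra Q) * CliffordAlgebra.ι Q v * ((g⁻¹ : _) : CliffordAlgebra Q) := by
  obtain ⟨l, hl⟩ := CSpinAux.cartan_dieudonne (Module.finrank K V) V Q hQ f hf rfl
  have hdet' : ((-1 : K)) ^ l.length = 1 := by
    rw [← CSpinAux.qreflProd_det Q l, ← hl]
    exact hdet
  have hEven : Even l.length := by
    rcases Nat.even_or_odd l.length with h | h
    · exact h
    · rw [Odd.neg_one_pow h] at hdet'
      norm_num at hdet'
  refine ⟨CSpinAux.ιUnitProd Q l, CSpinAux.ιUnitProd_mem_even Q l hEven, ?_⟩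
  intro v
  rw [hl, CSpinAux.ιUnitProd_conj Q l v, Even.neg_one_pow hEven, one_smul]
end
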